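/- For every 2AFW A = (Q,Σ,δ,q₀,F) there exists a nondeterministic finite automaton A_n over Σ with at most 2^{O(|Q|²)} states such that for all finite words w, A_n accepts w if and only if A accepts w. -/

import Mathlib

/-- Positive Boolean formulas over `X` (with `true` and `false`, no negation). -/
inductive PBF (X : Type) where
  | tru : PBF X
  | fls : PBF X
  | var : X → PBF X
  | conj : PBF X → PBF X → PBF X
  | disj : PBF X → PBF X → PBF X

/-- A set `M ⊆ X` satisfies a positive Boolean formula. -/
def PBF.satBy {X : Type} (M : Set X) : PBF X → Prop
  | .tru => True
  | .fls => False
  | .var x => x ∈ M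
  | .conj a b => a.satBy M ∧ b.satBy M
  | .disj a b => a.satBy M ∨ b.satBy M

/-- Directions of a two-way automaton: −1, 0, 1. -/
inductive Dir where
  | back : Dir
  | stay : Dir
  | fwd : Dir
deriving DecidableEq

/-- Applying a direction to a position (undefined when moving left of 0). -/
def Dir.apply : Dir → ℕ → Option ℕ
  | .back, 0 => none
  | .back, i + 1 => some i
  | .stay, i => some i
  | .fwd, i => some (i + 1)

/-- A two-way alternating automaton on finite words `(Q, Σ, δ, q₀, F)`. -/
structure TAFW (Q A : Type) where
  delta : Q → A → PBF (Q × Dir)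
  start : Q
  acc : Set Q

/-- Configurations of a 2AFW: a state with a read position, or `Accept`. -/
inductive Config (Q : Type) where
  | conf : Q → ℕ → Config Q
  | accept : Config Q

variable {Q A : Type}

/-- `ρ` (a partial labelling of the tree of finite index sequences) is a run of
the 2AFW `M` on `w` from position `k`. -/
structure IsRun (M : TAFW Q A) (w : List A) (k : ℕ)
    (ρ : List ℕ → Option (Config Q)) : Prop where
  root : ρ [] = some (.conf M.start k)
  tree : ∀ x n, (ρ (x ++ [n])).isSome → (ρ x).isSome
  accept_leaf : ∀ x, ρ x = some .accept → ∀ n, ρ (x ++ [n]) = none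
  node : ∀ x q i, ρ x = some (.conf q i) → ∃ a, w[i]? = some a ∧
    ((M.delta q a = .fls ∧ ∀ n, ρ (x ++ [n]) = none) ∨
     (M.delta q a = .tru ∧ (∃ n, ρ (x ++ [n]) = some .accept) ∧
        ∀ n c, ρ (x ++ [n]) = some c → c = .accept) ∨
     (M.delta q a ≠ .tru ∧ M.delta q a ≠ .fls ∧
       ∃ S : Set (Q × Dir), (M.delta q a).satBy S ∧
         (∀ τ ∈ S, ∃ n j, τ.2.apply i = some j ∧ ρ (x ++ [n]) = some (.conf τ.1 j)) ∧
         (∀ n c, ρ (x ++ [n]) = some c →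
            ∃ τ ∈ S, ∃ j, τ.2.apply i = some j ∧ c = .conf τ.1 j)))

/-- A leaf of the run tree. -/
def IsLeaf (ρ : List ℕ → Option (Config Q)) (x : List ℕ) : Prop :=
  (ρ x).isSome ∧ ∀ n, ρ (x ++ [n]) = none

/-- An infinite branch of the run tree, given by successive child indices. -/
def InfBranch (ρ : List ℕ → Option (Config Q)) (b : ℕ → ℕ) : Prop :=
  ∀ n, (ρ ((List.range n).map b)).isSome

/-- A run is accepting when every finite branch ends in `Accept` and every
infinite branch has some accepting state occurring infinitely often. -/
def AcceptingRun (M : TAFW Q A) (w : List A) (k : ℕ)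
    (ρ : List ℕ → Option (Config Q)) : Prop :=
  IsRun M w k ρ ∧
  (∀ x, IsLeaf ρ x → ρ x = some .accept) ∧
  (∀ b, InfBranch ρ b →
    ∃ f ∈ M.acc, ∀ N, ∃ n ≥ N, ∃ i, ρ ((List.range n).map b) = some (.conf f i))

/-- The 2AFW `M` accepts `w` from position `k`. -/
def TAFW.Accepts (M : TAFW Q A) (w : List A) (k : ℕ) : Prop :=
  ∃ ρ, AcceptingRun M w k ρ

/-! ### Auxiliary development -/

instance : Fintype Dir :=
  ⟨⟨{.back, .stay, .fwd}, by decide⟩, by intro x; cases x <;> decide⟩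

lemma card_dir : Fintype.card Dir = 3 := rfl

lemma PBF.satBy_mono {X : Type} {S T : Set X} (h : S ⊆ T) :
    ∀ {φ : PBF X}, φ.satBy S → φ.satBy T
  | .tru, _ => trivial
  | .fls, h' => h'.elim
  | .var x, h' => h h'
  | .conj a b, h' => ⟨satBy_mono h h'.1, satBy_mono h h'.2⟩
  | .disj a b, h' => h'.elim (fun h' => Or.inl (satBy_mono h h')) (fun h' => Or.inr (satBy_mono h h'))

/-- Projection of a strategy letter to the moves available from `q`. -/
def sproj (g : Set (Q × Dir × Q)) (q : Q) : Set (Q × Dir) := {τ | (q, τ.2, τ.1) ∈ g}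

/-- One step following the positional strategy `γ`. -/
def Step (γ : ℕ → Set (Q × Dir × Q)) (c c' : Q × ℕ) : Prop :=
  ∃ d, (c.1, d, c'.1) ∈ γ c.2 ∧ d.apply c.2 = some c'.2

/-- A path of length `k` following `γ`, staying at positions `≤ bnd`. -/
structure IsPath (γ : ℕ → Set (Q × Dir × Q)) (bnd : ℕ) (c : ℕ → Q × ℕ) (k : ℕ)
    (a b : Q × ℕ) : Prop where
  first : c 0 = a
  last : c k = b
  step : ∀ m < k, Step γ (c m) (c (m + 1))
  bdd : ∀ m ≤ k, (c m).2 ≤ bnd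

/-- The path visits an accepting state at some point after its start. -/
def HasF (M : TAFW Q A) (c : ℕ → Q × ℕ) (k : ℕ) : Prop :=
  ∃ m, 1 ≤ m ∧ m ≤ k ∧ (c m).1 ∈ M.acc

/-- A strategy word `γ` together with an annotation `η` and activity sets `α`:
these certify acceptance of `w` by the 2AFW `M`. -/
structure Good (M : TAFW Q A) (w : List A) (γ : ℕ → Set (Q × Dir × Q))
    (η : ℕ → Set (Q × Prop × Q)) (α : ℕ → Set Q) : Prop where
  start_mem : M.start ∈ α 0
  active_lt : ∀ i q, q ∈ α i → i < w.length
  sat : ∀ i q a, q ∈ α i → w[i]? = some a →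
    (M.delta q a).satBy (sproj (γ i) q) ∧ (M.delta q a ≠ .tru → (sproj (γ i) q).Nonempty)
  edge : ∀ i q d q', (q, d, q') ∈ γ i → q ∈ α i ∧ ∃ j, d.apply i = some j ∧ q' ∈ α j
  clo1 : ∀ i q q', (q, .stay, q') ∈ γ i → (q, q' ∈ M.acc, q') ∈ η i
  clo2 : ∀ i q P q' P' q'', (q, P, q') ∈ η i → (q', P', q'') ∈ η i → (q, P ∨ P', q'') ∈ η i
  clo3 : ∀ i q q₁ q', (q, .back, q₁) ∈ γ (i + 1) → (q₁, .fwd, q') ∈ γ i →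
    (q, q₁ ∈ M.acc ∨ q' ∈ M.acc, q') ∈ η (i + 1)
  clo4 : ∀ i q q₁ P q₂ q', (q, .back, q₁) ∈ γ (i + 1) → (q₁, P, q₂) ∈ η i →
    (q₂, .fwd, q') ∈ γ i → (q, q₁ ∈ M.acc ∨ P ∨ q' ∈ M.acc, q') ∈ η (i + 1)
  accpt : ∀ i q P, (q, P, q) ∈ η i → P

section PathLemmas

variable {M : TAFW Q A} {γ : ℕ → Set (Q × Dir × Q)} {bnd : ℕ}

lemma isPath_segment {c : ℕ → Q × ℕ} {k : ℕ} {a b : Q × ℕ} (h : IsPath γ bnd c k a b)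
    {s t : ℕ} (hs : s ≤ t) (ht : t ≤ k) :
    IsPath γ bnd (fun m => c (s + m)) (t - s) (c s) (c t) where
  first := by simp
  last := by
    show c (s + (t - s)) = c t
    have e : s + (t - s) = t := by omega
    rw [e]
  step m hm := by
    show Step γ (c (s + m)) (c (s + (m + 1)))
    have e : s + (m + 1) = (s + m) + 1 := by omega
    rw [e]
    exact h.step (s + m) (by omega)
  bdd m hm := h.bdd (s + m) (by omega)

lemma isPath_compose {c c' : ℕ → Q × ℕ} {k k' : ℕ} {a b b' : Q × ℕ}
    (h : IsPath γ bnd c k a b) (h' : IsPath γ bnd c' k' b b') :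
    ∃ c'', IsPath γ bnd c'' (k + k') a b' ∧
      (HasF M c'' (k + k') ↔ (HasF M c k ∨ HasF M c' k')) := by
  classical
  refine ⟨fun m => if m ≤ k then c m else c' (m - k), ⟨?_, ?_, ?_, ?_⟩, ?_⟩
  · simp [h.first]
  · by_cases hk' : k' = 0
    · subst hk'
      have : c k = b := h.last
      simp [this]
      rw [← h'.first, ← h'.last]
    · have hle : ¬ (k + k' ≤ k) := by omega
      simp only [hle, if_false]
      have e : k + k' - k = k' := by omega
      rw [e, h'.last]
  · intro m hm
    rcases lt_trichotomy m k with hmk | hmk | hmk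
    · have e1 : m ≤ k := by omega
      have e2 : m + 1 ≤ k := by omega
      simp only [e1, e2, if_true]
      exact h.step m hmk
    · subst hmk
      have e1 : m ≤ m := le_refl _
      have e2 : ¬ (m + 1 ≤ m) := by omega
      simp only [e1, e2, if_true, if_false]
      have e3 : m + 1 - m = 1 := by omega
      rw [e3, h.last, ← h'.first]
      exact h'.step 0 (by omega)
    · have e1 : ¬ (m ≤ k) := by omega
      have e2 : ¬ (m + 1 ≤ k) := by omega
      simp only [e1, e2, if_false]
      have e3 : m + 1 - k = (m - k) + 1 := by omega
      rw [e3]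
      exact h'.step (m - k) (by omega)
  · intro m hm
    by_cases hmk : m ≤ k
    · simp only [hmk, if_true]; exact h.bdd m hmk
    · simp only [hmk, if_false]; exact h'.bdd (m - k) (by omega)
  · constructor
    · rintro ⟨m, h1, h2, h3⟩
      by_cases hmk : m ≤ k
      · left; exact ⟨m, h1, hmk, by simpa [hmk] using h3⟩
      · right
        refine ⟨m - k, by omega, by omega, by simpa [hmk] using h3⟩
    · rintro (⟨m, h1, h2, h3⟩ | ⟨m, h1, h2, h3⟩)
      · exact ⟨m, h1, by omega, by simpa [h2] using h3⟩
      · refine ⟨k + m, by omega, by omega, ?_⟩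
        have e1 : ¬ (k + m ≤ k) := by omega
        have e2 : k + m - k = m := by omega
        simpa [e1, e2] using h3

/-- Single step as a path. -/
lemma isPath_single {q q' : Q} {i j : ℕ} {d : Dir} (hmem : (q, d, q') ∈ γ i)
    (happ : d.apply i = some j) (hi : i ≤ bnd) (hj : j ≤ bnd) :
    IsPath γ bnd (fun m => if m = 0 then (q, i) else (q', j)) 1 (q, i) (q', j) ∧
      (HasF M (fun m => if m = 0 then (q, i) else (q', j)) 1 ↔ q' ∈ M.acc) := by
  refine ⟨⟨by simp, by simp, ?_, ?_⟩, ?_⟩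
  · intro m hm
    have : m = 0 := by omega
    subst this
    simp only [if_pos rfl, if_neg one_ne_zero]
    exact ⟨d, hmem, happ⟩
  · intro m hm
    interval_cases m <;> simp [hi, hj]
  · constructor
    · rintro ⟨m, h1, h2, h3⟩
      have : m = 1 := by omega
      subst this
      simpa using h3
    · intro hq'
      exact ⟨1, le_refl _, le_refl _, by simpa using hq'⟩

end PathLemmas

variable {M : TAFW Q A}

/-- Every strategy loop at level `i` staying at positions `≤ i` is recorded in a
closed annotation, with its "visits an accepting state" proposition. -/
lemma path_to_eta {w : List A} {γ : ℕ → Set (Q × Dir × Q)} {η : ℕ → Set (Q × Prop × Q)}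
    {α : ℕ → Set Q} (hg : Good M w γ η α) :
    ∀ k, 1 ≤ k → ∀ (i : ℕ) (q q' : Q) (c : ℕ → Q × ℕ), IsPath γ i c k (q, i) (q', i) →
      ∃ P, (q, P, q') ∈ η i ∧ (P ↔ HasF M c k) := by
  intro k
  induction k using Nat.strong_induction_on with
  | _ k IH =>
  intro hk i q q' c hp
  have hs := hp.step 0 (by omega)
  rw [hp.first] at hs
  simp only [Nat.zero_add] at hs
  obtain ⟨d, hmem, happ⟩ := hs
  cases d with
  | fwd =>
    exfalso
    have hb := hp.bdd 1 (by omega)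
    simp only [Dir.apply] at happ
    have : (c 1).2 = i + 1 := by
      injection happ with h; omega
    omega
  | stay =>
    have hci1 : (c 1).2 = i := by
      simp only [Dir.apply] at happ
      injection happ with h; omega
    have hc1 : c 1 = ((c 1).1, i) := by
      rw [← hci1]
    have hη1 := hg.clo1 i q (c 1).1 hmem
    by_cases hk1 : k = 1
    · subst hk1
      have hq' : (c 1).1 = q' := by rw [hp.last]
      rw [hq'] at hη1
      refine ⟨q' ∈ M.acc, hη1, ?_⟩
      constructor
      · intro h
        exact ⟨1, le_refl _, le_refl _, by rw [hp.last]; exact h⟩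
      · rintro ⟨m, h1, h2, h3⟩
        have : m = 1 := by omega
        subst this
        rwa [hp.last] at h3
    · -- k ≥ 2, use the tail path
      have htail := isPath_segment hp (s := 1) (t := k) (by omega) (le_refl _)
      rw [hc1, hp.last] at htail
      obtain ⟨P₂, hP₂, hP₂iff⟩ := IH (k - 1) (by omega) (by omega) i (c 1).1 q' _ htail
      refine ⟨(c 1).1 ∈ M.acc ∨ P₂, hg.clo2 i q _ (c 1).1 P₂ q' hη1 hP₂, ?_⟩
      constructor
      · rintro (h | h)
        · exact ⟨1, le_refl _, by omega, h⟩
        · obtain ⟨m, h1, h2, h3⟩ := hP₂iff.1 h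
          exact ⟨1 + m, by omega, by omega, h3⟩
      · rintro ⟨m, h1, h2, h3⟩
        by_cases hm1 : m = 1
        · subst hm1; exact Or.inl h3
        · refine Or.inr (hP₂iff.2 ⟨m - 1, by omega, by omega, ?_⟩)
          have e : 1 + (m - 1) = m := by omega
          simpa [e] using h3
  | back =>
    -- i must be positive
    obtain ⟨i₁, rfl⟩ : ∃ i₁, i = i₁ + 1 := by
      cases i with
      | zero => simp [Dir.apply] at happ
      | succ i₁ => exact ⟨i₁, rfl⟩
    have hci1 : (c 1).2 = i₁ := by
      simp only [Dir.apply] at happ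
      injection happ with h; omega
    have hc1 : c 1 = ((c 1).1, i₁) := by rw [← hci1]
    -- first return to level i₁ + 1
    have hex : ∃ m, 1 ≤ m ∧ (c m).2 = i₁ + 1 := ⟨k, hk, by rw [hp.last]⟩
    classical
    set t := Nat.find hex with htdef
    obtain ⟨ht1, htlev⟩ : 1 ≤ t ∧ (c t).2 = i₁ + 1 := Nat.find_spec hex
    have htk : t ≤ k := Nat.find_le ⟨hk, by rw [hp.last]⟩
    have ht2 : 2 ≤ t := by
      rcases Nat.lt_or_ge t 2 with h | h
      · exfalso
        have : t = 1 := by omega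
        rw [this] at htlev
        omega
      · exact h
    have hbelow : ∀ m, 1 ≤ m → m < t → (c m).2 ≤ i₁ := by
      intro m h1 h2
      have hne := Nat.find_min hex h2
      have := hp.bdd m (by omega)
      simp only [not_and] at hne
      have := hne h1
      omega
    -- the step re-entering level i₁+1 goes forward from level i₁
    have hstep := hp.step (t - 1) (by omega)
    obtain ⟨d', hmem', happ'⟩ := hstep
    have hprev : (c (t - 1)).2 ≤ i₁ := hbelow (t - 1) (by omega) (by omega)
    have e : t - 1 + 1 = t := by omega
    rw [e] at hmem' happ'
    have hd' : d' = Dir.fwd ∧ (c (t - 1)).2 = i₁ := by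
      cases d' with
      | stay =>
        exfalso
        simp only [Dir.apply] at happ'
        injection happ' with h
        omega
      | back =>
        exfalso
        cases hp0 : (c (t - 1)).2 with
        | zero => rw [hp0] at happ'; simp [Dir.apply] at happ'
        | succ p =>
          rw [hp0] at happ'
          simp only [Dir.apply] at happ'
          injection happ' with h
          omega
      | fwd =>
        simp only [Dir.apply] at happ'
        injection happ' with h
        exact ⟨rfl, by omega⟩
    obtain ⟨rfl, hprevlev⟩ := hd'
    rw [hprevlev] at hmem'
    -- middle part: (q, Pm, (c t).1) ∈ η (i₁+1) capturing F-visits on [1, t]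
    have hmid : ∃ Pm, (q, Pm, (c t).1) ∈ η (i₁ + 1) ∧
        (Pm ↔ ∃ m, 1 ≤ m ∧ m ≤ t ∧ (c m).1 ∈ M.acc) := by
      by_cases ht2' : t = 2
      · have h11 : (c (t - 1)).1 = (c 1).1 := by rw [ht2']
        rw [h11] at hmem'
        refine ⟨(c 1).1 ∈ M.acc ∨ (c t).1 ∈ M.acc,
          hg.clo3 i₁ q (c 1).1 (c t).1 hmem hmem', ?_⟩
        constructor
        · rintro (h | h)
          · exact ⟨1, le_refl _, by omega, h⟩
          · exact ⟨t, by omega, le_refl _, h⟩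
        · rintro ⟨m, h1, h2, h3⟩
          rw [ht2'] at h2
          interval_cases m
          · exact Or.inl h3
          · rw [ht2']; exact Or.inr h3
      · -- t ≥ 3: inner path at level ≤ i₁ from (c 1) to (c (t-1))
        have hinner : IsPath γ i₁ (fun m => c (1 + m)) (t - 2) ((c 1).1, i₁)
            ((c (t - 1)).1, i₁) := by
          refine ⟨by simpa using hc1, ?_, ?_, ?_⟩
          · show c (1 + (t - 2)) = _
            have e2 : 1 + (t - 2) = t - 1 := by omega
            rw [e2, ← hprevlev]
          · intro m hm
            show Step γ (c (1 + m)) (c (1 + (m + 1)))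
            have e2 : 1 + (m + 1) = (1 + m) + 1 := by omega
            rw [e2]
            exact hp.step (1 + m) (by omega)
          · intro m hm
            exact hbelow (1 + m) (by omega) (by omega)
        obtain ⟨Pin, hPin, hPiniff⟩ := IH (t - 2) (by omega) (by omega) i₁ (c 1).1
          (c (t - 1)).1 _ hinner
        refine ⟨(c 1).1 ∈ M.acc ∨ Pin ∨ (c t).1 ∈ M.acc,
          hg.clo4 i₁ q (c 1).1 Pin (c (t - 1)).1 (c t).1 hmem hPin hmem', ?_⟩
        constructor
        · rintro (h | h | h)
          · exact ⟨1, le_refl _, by omega, h⟩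
          · obtain ⟨m, h1, h2, h3⟩ := hPiniff.1 h
            exact ⟨1 + m, by omega, by omega, h3⟩
          · exact ⟨t, by omega, le_refl _, h⟩
        · rintro ⟨m, h1, h2, h3⟩
          by_cases hm1 : m = 1
          · subst hm1; exact Or.inl h3
          · by_cases hmt : m = t
            · subst hmt; exact Or.inr (Or.inr h3)
            · refine Or.inr (Or.inl (hPiniff.2 ⟨m - 1, by omega, by omega, ?_⟩))
              have e2 : 1 + (m - 1) = m := by omega
              simpa [e2] using h3
    obtain ⟨Pm, hPm, hPmiff⟩ := hmid
    by_cases htk' : t = k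
    · subst htk'
      have hq' : (c t).1 = q' := by rw [hp.last]
      rw [hq'] at hPm
      exact ⟨Pm, hPm, hPmiff.trans Iff.rfl⟩
    · -- compose with the tail from t to k
      have htail := isPath_segment hp (s := t) (t := k) (by omega) (le_refl _)
      have hct : c t = ((c t).1, i₁ + 1) := by rw [← htlev]
      rw [hct, hp.last] at htail
      obtain ⟨Pt, hPt, hPtiff⟩ := IH (k - t) (by omega) (by omega) (i₁ + 1) (c t).1 q' _ htail
      refine ⟨Pm ∨ Pt, hg.clo2 (i₁ + 1) q Pm (c t).1 Pt q' hPm hPt, ?_⟩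
      constructor
      · rintro (h | h)
        · obtain ⟨m, h1, h2, h3⟩ := hPmiff.1 h
          exact ⟨m, h1, by omega, h3⟩
        · obtain ⟨m, h1, h2, h3⟩ := hPtiff.1 h
          exact ⟨t + m, by omega, by omega, h3⟩
      · rintro ⟨m, h1, h2, h3⟩
        by_cases hmt : m ≤ t
        · exact Or.inl (hPmiff.2 ⟨m, h1, hmt, h3⟩)
        · refine Or.inr (hPtiff.2 ⟨m - t, by omega, by omega, ?_⟩)
          have e2 : t + (m - t) = m := by omega
          simpa [e2] using h3

/-! ### Soundness: a good certificate yields an accepting run -/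

section Soundness

variable [Fintype Q] (M : TAFW Q A) (w : List A) (γ : ℕ → Set (Q × Dir × Q))

open Classical in
/-- The children function of the run built from a strategy word. -/
noncomputable def childF : Config Q → ℕ → Option (Config Q) := fun c m =>
  match c with
  | .accept => none
  | .conf q i =>
    if (∃ a, w[i]? = some a ∧ M.delta q a = .tru) then
      (if m = 0 then some Config.accept else none)
    else
      ((Finset.univ : Finset (Q × Dir)).toList[m]?).bind (fun τ =>
        (τ.2.apply i).bind (fun j =>
          if (q, τ.2, τ.1) ∈ γ i then some (.conf τ.1 j) else none))

/-- The run built from a strategy word. -/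
noncomputable def runOf : List ℕ → Option (Config Q) := fun x =>
  x.foldl (fun oc m => oc.bind fun c => childF M w γ c m) (some (.conf M.start 0))

lemma runOf_nil : runOf M w γ [] = some (.conf M.start 0) := rfl

lemma runOf_append (x : List ℕ) (m : ℕ) :
    runOf M w γ (x ++ [m]) = (runOf M w γ x).bind (fun c => childF M w γ c m) := by
  simp [runOf, List.foldl_append]

lemma childF_accept (m : ℕ) : childF M w γ .accept m = none := rfl

open Classical in
lemma childF_tru {q : Q} {i : ℕ} (h : ∃ a, w[i]? = some a ∧ M.delta q a = .tru) (m : ℕ) :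
    childF M w γ (.conf q i) m = if m = 0 then some Config.accept else none := by
  simp only [childF, if_pos h]

open Classical in
lemma childF_ntru {q : Q} {i : ℕ} (h : ¬ ∃ a, w[i]? = some a ∧ M.delta q a = .tru) (m : ℕ) :
    childF M w γ (.conf q i) m =
      ((Finset.univ : Finset (Q × Dir)).toList[m]?).bind (fun τ =>
        (τ.2.apply i).bind (fun j =>
          if (q, τ.2, τ.1) ∈ γ i then some (.conf τ.1 j) else none)) := by
  simp only [childF, if_neg h]

/-- Analysis of a successful child. -/
lemma childF_eq_some {q : Q} {i m : ℕ} {cc : Config Q}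
    (h : childF M w γ (.conf q i) m = some cc) :
    ((∃ a, w[i]? = some a ∧ M.delta q a = .tru) ∧ m = 0 ∧ cc = .accept) ∨
    ((¬ ∃ a, w[i]? = some a ∧ M.delta q a = .tru) ∧
      ∃ q' d j, (q, d, q') ∈ γ i ∧ d.apply i = some j ∧ cc = .conf q' j) := by
  classical
  by_cases htru : ∃ a, w[i]? = some a ∧ M.delta q a = .tru
  · rw [childF_tru M w γ htru] at h
    by_cases hm : m = 0
    · subst hm
      simp only [if_pos rfl] at h
      exact Or.inl ⟨htru, rfl, by injection h with h'; exact h'.symm⟩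
    · rw [if_neg hm] at h; exact absurd h (by simp)
  · rw [childF_ntru M w γ htru] at h
    refine Or.inr ⟨htru, ?_⟩
    rcases hg : (Finset.univ : Finset (Q × Dir)).toList[m]? with _ | τ
    · rw [hg] at h; exact absurd h (by simp)
    · rw [hg] at h
      simp only [Option.bind_some] at h
      rcases ha : τ.2.apply i with _ | j
      · rw [ha] at h; exact absurd h (by simp)
      · rw [ha] at h
        simp only [Option.bind_some] at h
        by_cases hmem : (q, τ.2, τ.1) ∈ γ i
        · rw [if_pos hmem] at h
          exact ⟨τ.1, τ.2, j, hmem, ha, by injection h with h'; exact h'.symm⟩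
        · rw [if_neg hmem] at h; exact absurd h (by simp)

/-- Synthesis of a child from a strategy move. -/
lemma childF_of_move {q q' : Q} {i j : ℕ} {d : Dir}
    (h : ¬ ∃ a, w[i]? = some a ∧ M.delta q a = .tru)
    (hmem : (q, d, q') ∈ γ i) (happ : d.apply i = some j) :
    ∃ m, childF M w γ (.conf q i) m = some (.conf q' j) := by
  classical
  have hmem' : (q', d) ∈ (Finset.univ : Finset (Q × Dir)).toList := by
    rw [Finset.mem_toList]; exact Finset.mem_univ _
  obtain ⟨m, hm⟩ := List.getElem?_of_mem hmem'
  refine ⟨m, ?_⟩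
  rw [childF_ntru M w γ h, hm]
  simp only [Option.bind_some, happ, if_pos hmem]

end Soundness

theorem good_accepts [Fintype Q] {M : TAFW Q A} {w : List A} {γ : ℕ → Set (Q × Dir × Q)}
    {η : ℕ → Set (Q × Prop × Q)} {α : ℕ → Set Q} (hg : Good M w γ η α) :
    M.Accepts w 0 := by
  classical
  set ρ := runOf M w γ with hρdef
  have hρapp : ∀ x m, ρ (x ++ [m]) = (ρ x).bind (fun c => childF M w γ c m) :=
    runOf_append M w γ
  have hρnil : ρ [] = some (.conf M.start 0) := rfl
  -- the invariant: every configuration in the run is active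
  have hinv : ∀ x q i, ρ x = some (.conf q i) → q ∈ α i := by
    intro x
    induction x using List.reverseRecOn with
    | nil =>
      intro q i h
      rw [hρnil] at h
      injection h with h'
      injection h' with h1 h2
      rw [← h1, ← h2]
      exact hg.start_mem
    | append_singleton x m IH =>
      intro q i h
      rw [hρapp] at h
      cases hx : ρ x with
      | none => rw [hx] at h; exact absurd h (by simp)
      | some c =>
        rw [hx, Option.bind_some] at h
        cases c with
        | accept => rw [childF_accept] at h; exact absurd h (by simp)
        | conf q0 i0 =>
          rcases childF_eq_some M w γ h with ⟨_, _, hcc⟩ | ⟨_, q', d, j, hmem, happ, hcc⟩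
          · exact absurd hcc (by simp)
          · obtain ⟨j', happ', hj'⟩ := (hg.edge i0 q0 d q' hmem).2
            rw [happ'] at happ
            injection happ with hjj
            injection hcc with h1 h2
            rw [h1, h2, ← hjj]
            exact hj'
  -- the run structure
  have hrun : IsRun M w 0 ρ := by
    refine ⟨runOf_nil M w γ, ?_, ?_, ?_⟩
    · intro x m h
      rw [hρapp] at h
      cases hx : ρ x with
      | none => rw [hx] at h; exact absurd h (by simp)
      | some c => simp [hx]
    · intro x hx m
      rw [hρapp, hx, Option.bind_some, childF_accept]
    · intro x q i hx
      have hq : q ∈ α i := hinv x q i hx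
      have hi : i < w.length := hg.active_lt i q hq
      set a := w.get ⟨i, hi⟩ with hadef
      have ha : w[i]? = some a := List.getElem?_eq_getElem hi
      refine ⟨a, ha, ?_⟩
      by_cases htru : M.delta q a = .tru
      · have hEx : ∃ a', w[i]? = some a' ∧ M.delta q a' = .tru := ⟨a, ha, htru⟩
        refine Or.inr (Or.inl ⟨htru, ⟨0, ?_⟩, ?_⟩)
        · rw [hρapp, hx, Option.bind_some, childF_tru M w γ hEx, if_pos rfl]
        · intro m c hc
          rw [hρapp, hx, Option.bind_some, childF_tru M w γ hEx] at hc
          by_cases hm : m = 0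
          · rw [if_pos hm] at hc; injection hc with h'; exact h'.symm
          · rw [if_neg hm] at hc; exact absurd hc (by simp)
      · have hEx : ¬ ∃ a', w[i]? = some a' ∧ M.delta q a' = .tru := by
          rintro ⟨a', ha', htru'⟩
          rw [ha] at ha'
          injection ha' with h'
          rw [h'] at htru
          exact htru htru'
        by_cases hfls : M.delta q a = .fls
        · exfalso
          have := (hg.sat i q a hq ha).1
          rw [hfls] at this
          exact this
        · refine Or.inr (Or.inr ⟨htru, hfls, sproj (γ i) q, (hg.sat i q a hq ha).1, ?_, ?_⟩)
          · rintro τ hτ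
            obtain ⟨j, happ, _⟩ := (hg.edge i q τ.2 τ.1 hτ).2
            obtain ⟨m, hm⟩ := childF_of_move M w γ hEx hτ happ
            refine ⟨m, j, happ, ?_⟩
            rw [hρapp, hx, Option.bind_some]
            exact hm
          · intro m c hc
            rw [hρapp, hx, Option.bind_some] at hc
            rcases childF_eq_some M w γ hc with ⟨hEx', _, _⟩ | ⟨_, q', d, j, hmem, happ, hcc⟩
            · exact absurd hEx' hEx
            · exact ⟨(q', d), hmem, j, happ, hcc⟩
  -- leaves are accepting
  have hleaf : ∀ x, IsLeaf ρ x → ρ x = some .accept := by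
    rintro x ⟨hsome, hnone⟩
    cases hx : ρ x with
    | none => rw [hx] at hsome; exact absurd hsome (by simp)
    | some c =>
      cases c with
      | accept => rfl
      | conf q i =>
        exfalso
        have hq : q ∈ α i := hinv x q i hx
        have hi : i < w.length := hg.active_lt i q hq
        set a := w.get ⟨i, hi⟩ with hadef
        have ha : w[i]? = some a := List.getElem?_eq_getElem hi
        by_cases htru : M.delta q a = .tru
        · have hEx : ∃ a', w[i]? = some a' ∧ M.delta q a' = .tru := ⟨a, ha, htru⟩
          have := hnone 0
          rw [hρapp, hx, Option.bind_some, childF_tru M w γ hEx, if_pos rfl]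
            at this
          exact absurd this (by simp)
        · have hEx : ¬ ∃ a', w[i]? = some a' ∧ M.delta q a' = .tru := by
            rintro ⟨a', ha', htru'⟩
            rw [ha] at ha'
            injection ha' with h'
            rw [h'] at htru
            exact htru htru'
          obtain ⟨τ, hτ⟩ := (hg.sat i q a hq ha).2 htru
          obtain ⟨j, happ, _⟩ := (hg.edge i q τ.2 τ.1 hτ).2
          obtain ⟨m, hm⟩ := childF_of_move M w γ hEx hτ happ
          have := hnone m
          rw [hρapp, hx, Option.bind_some, hm] at this
          exact absurd this (by simp)
  -- infinite branches visit accepting states infinitely often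
  refine ⟨ρ, hrun, hleaf, ?_⟩
  intro b hb
  have hRsucc : ∀ m : ℕ, (List.range (m + 1)).map b = (List.range m).map b ++ [b m] := by
    intro m
    rw [List.range_succ, List.map_append, List.map_singleton]
  have hconf : ∀ m, ∃ q i, ρ ((List.range m).map b) = some (.conf q i) := by
    intro m
    have h1 := hb m
    have h2 := hb (m + 1)
    cases hx : ρ ((List.range m).map b) with
    | none => rw [hx] at h1; exact absurd h1 (by simp)
    | some c =>
      cases c with
      | conf q i => exact ⟨q, i, rfl⟩
      | accept =>
        exfalso
        rw [hRsucc, hρapp] at h2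
        rw [hx, Option.bind_some, childF_accept] at h2
        exact absurd h2 (by simp)
  choose qf pf hqp using hconf
  have hstepf : ∀ m, Step γ (qf m, pf m) (qf (m + 1), pf (m + 1)) := by
    intro m
    have h2 := hqp (m + 1)
    rw [hRsucc, hρapp] at h2
    have h1 := hqp m
    rw [h1, Option.bind_some] at h2
    rcases childF_eq_some M w γ h2 with ⟨_, _, hcc⟩ | ⟨_, q', d, j, hmem, happ, hcc⟩
    · exact absurd hcc (by simp)
    · injection hcc with he1 he2
      rw [he1, he2]
      exact ⟨d, hmem, happ⟩
  have hact : ∀ m, qf m ∈ α (pf m) := fun m => hinv _ _ _ (hqp m)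
  have hlt : ∀ m, pf m < w.length := fun m => hg.active_lt _ _ (hact m)
  by_contra hcon
  push_neg at hcon
  -- eventally no accepting states on the branch
  have hno : ∀ f, f ∈ M.acc → ∃ N, ∀ m, N ≤ m → qf m ≠ f := by
    intro f hf
    obtain ⟨N, hN⟩ := hcon f hf
    exact ⟨N, fun m hm heq => hN m hm (pf m) (by rw [← heq]; exact hqp m)⟩
  choose Nf hNf using hno
  set N₀ : ℕ := Finset.univ.sup (fun f => if h : f ∈ M.acc then Nf f h else 0) with hN₀def
  have hN₀ : ∀ m, N₀ ≤ m → qf m ∉ M.acc := by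
    intro m hm hf
    refine hNf (qf m) hf m (le_trans ?_ hm) rfl
    have h1 : (if h : qf m ∈ M.acc then Nf (qf m) h else 0) ≤ N₀ :=
      Finset.le_sup (f := fun f => if h : f ∈ M.acc then Nf f h else 0) (Finset.mem_univ (qf m))
    rwa [dif_pos hf] at h1
  -- the maximal recurrent position
  have hrecne : ∃ i, ∀ N, ∃ m, N ≤ m ∧ pf m = i := by
    by_contra h
    push_neg at h
    choose g hgg using h
    set N₁ : ℕ := (Finset.range w.length).sup g with hN₁def
    exact hgg (pf N₁) N₁ (Finset.le_sup (f := g) (Finset.mem_range.2 (hlt N₁))) rfl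
  obtain ⟨istar, hmemRec⟩ : ∃ i, (∀ N, ∃ m, N ≤ m ∧ pf m = i) ∧ ∀ i', i < i' → ∃ N, ∀ m, N ≤ m → pf m ≠ i' := by
    set Rec : Set ℕ := {i | ∀ N, ∃ m, N ≤ m ∧ pf m = i} with hRdef
    have hRbdd : BddAbove Rec := by
      refine ⟨w.length, ?_⟩
      rintro i hi
      obtain ⟨m, _, rfl⟩ := hi 0
      exact le_of_lt (hlt m)
    have hsup := Nat.sSup_mem hrecne hRbdd
    refine ⟨sSup Rec, hsup, ?_⟩
    intro i' hi'
    have hiR : i' ∉ Rec := fun h => absurd (le_csSup hRbdd h) (by omega)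
    rw [hRdef, Set.mem_setOf_eq] at hiR
    push_neg at hiR
    obtain ⟨N, hN⟩ := hiR
    exact ⟨N, hN⟩
  obtain ⟨hmemRec, habove⟩ := hmemRec
  choose g2 hg2 using habove
  set N₂ : ℕ := (Finset.range w.length).sup (fun i => if h : istar < i then g2 i h else 0)
    with hN₂def
  have hN₂ : ∀ m, N₂ ≤ m → pf m ≤ istar := by
    intro m hm
    by_contra hgt
    push_neg at hgt
    refine hg2 (pf m) hgt m (le_trans ?_ hm) rfl
    have h1 : (if h : istar < pf m then g2 (pf m) h else 0) ≤ N₂ :=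
      Finset.le_sup (f := fun i => if h : istar < i then g2 i h else 0)
        (Finset.mem_range.2 (hlt m))
    rwa [dif_pos hgt] at h1
  choose u hu1 hu2 using hmemRec
  set N₃ := max N₀ N₂ with hN₃def
  have hN₃0 : N₀ ≤ N₃ := le_max_left _ _
  have hN₃2 : N₂ ≤ N₃ := le_max_right _ _
  set t : ℕ → ℕ := fun k => Nat.rec (u N₃) (fun _ prev => u (prev + 1)) k with htdef
  have htS : ∀ k, t (k + 1) = u (t k + 1) := fun k => rfl
  have htlev : ∀ k, pf (t k) = istar := by
    intro k
    cases k with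
    | zero => exact hu2 N₃
    | succ k => rw [htS]; exact hu2 _
  have htge : ∀ k, N₃ ≤ t k := by
    intro k
    induction k with
    | zero => exact hu1 N₃
    | succ k ih =>
      rw [htS]
      exact le_trans (le_trans ih (by omega)) (hu1 _)
  have htmono : StrictMono t := by
    refine strictMono_nat_of_lt_succ ?_
    intro k
    rw [htS]
    exact lt_of_lt_of_le (by omega) (hu1 _)
  have hcard : Fintype.card Q < Fintype.card (Fin (Fintype.card Q + 1)) := by simp
  obtain ⟨x, y, hxy, hfeq⟩ := Fintype.exists_ne_map_eq_of_card_lt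
    (fun k : Fin (Fintype.card Q + 1) => qf (t k)) hcard
  have hne : (x : ℕ) ≠ (y : ℕ) := fun h => hxy (Fin.ext h)
  obtain ⟨m1, m2, hm12, hq12, hl1, hl2, hge1⟩ : ∃ m1 m2, m1 < m2 ∧ qf m1 = qf m2 ∧
      pf m1 = istar ∧ pf m2 = istar ∧ N₃ ≤ m1 := by
    rcases lt_or_gt_of_ne hne with h | h
    · exact ⟨t x, t y, htmono h, hfeq, htlev x, htlev y, htge x⟩
    · exact ⟨t y, t x, htmono h, hfeq.symm, htlev y, htlev x, htge y⟩
  set k := m2 - m1 with hkdef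
  have hk1 : 1 ≤ k := by omega
  set cp : ℕ → Q × ℕ := fun m => (qf (m1 + m), pf (m1 + m)) with hcp
  have hpath : IsPath γ istar cp k (qf m1, istar) (qf m1, istar) := by
    refine ⟨?_, ?_, ?_, ?_⟩
    · show (qf (m1 + 0), pf (m1 + 0)) = _
      rw [Nat.add_zero, hl1]
    · show (qf (m1 + k), pf (m1 + k)) = _
      have e : m1 + k = m2 := by omega
      rw [e, hl2, ← hq12]
    · intro m hm
      show Step γ (qf (m1 + m), pf (m1 + m)) (qf (m1 + (m + 1)), pf (m1 + (m + 1)))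
      have e : m1 + (m + 1) = (m1 + m) + 1 := by omega
      rw [e]
      exact hstepf (m1 + m)
    · intro m hm
      exact hN₂ (m1 + m) (by omega)
  obtain ⟨P, hP, hPiff⟩ := path_to_eta hg k hk1 istar (qf m1) (qf m1) cp hpath
  obtain ⟨m, hm1', hm2', hmF⟩ := hPiff.1 (hg.accpt istar (qf m1) P hP)
  exact hN₀ (m1 + m) (by omega) hmF

/-! ### Completeness: an accepting run yields a good certificate -/

lemma isPath_mono_bnd {γ : ℕ → Set (Q × Dir × Q)} {bnd bnd' : ℕ} {c : ℕ → Q × ℕ} {k : ℕ}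
    {a b : Q × ℕ} (h : IsPath γ bnd c k a b) (hb : bnd ≤ bnd') : IsPath γ bnd' c k a b :=
  ⟨h.first, h.last, h.step, fun m hm => le_trans (h.bdd m hm) hb⟩

theorem accepts_good {M : TAFW Q A} {w : List A} (hacc : M.Accepts w 0) :
    ∃ γ η α, Good M w γ η α := by
  classical
  obtain ⟨ρ, hrun, hleaf, hbranch⟩ := hacc
  -- preliminary structural facts
  have hprefix : ∀ x y, (ρ (x ++ y)).isSome → (ρ x).isSome := by
    intro x y
    induction y using List.reverseRecOn with
    | nil => intro h; simpa using h
    | append_singleton y m IH =>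
      intro h
      rw [← List.append_assoc] at h
      exact IH (hrun.tree (x ++ y) m h)
  have hchildex : ∀ x q i, ρ x = some (.conf q i) → ∃ m c, ρ (x ++ [m]) = some c := by
    intro x q i hx
    by_contra h
    push_neg at h
    have hnone : ∀ m, ρ (x ++ [m]) = none := by
      intro m
      cases hm : ρ (x ++ [m]) with
      | none => rfl
      | some c => exact absurd hm (h m c)
    have := hleaf x ⟨by rw [hx]; rfl, hnone⟩
    rw [hx] at this
    exact absurd this (by simp)
  -- the relation of non-accepting children is well-founded
  set Rel : List ℕ → List ℕ → Prop :=
    fun y x => (∃ q i, ρ y = some (.conf q i) ∧ q ∉ M.acc) ∧ ∃ m, y = x ++ [m] with hReldef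
  have hdesc : ∀ f : ℕ → List ℕ, (∀ n, Rel (f (n + 1)) (f n)) → False := by
    intro f hrel
    have hchild : ∀ n, ∃ m, f (n + 1) = f n ++ [m] := fun n => (hrel n).2
    choose mm hmm using hchild
    have hsomeS : ∀ n, (ρ (f (n + 1))).isSome := by
      intro n
      obtain ⟨q, i, hq, _⟩ := (hrel n).1
      rw [hq]; rfl
    have hsome : ∀ n, (ρ (f n)).isSome := by
      intro n
      cases n with
      | zero =>
        have := hsomeS 0
        rw [hmm 0] at this
        exact hrun.tree _ _ this
      | succ n => exact hsomeS n
    set L := (f 0).length with hLdef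
    set b : ℕ → ℕ := fun j => if h : j < L then (f 0)[j] else mm (j - L) with hbdef
    have hA : ∀ k, (List.range (L + k)).map b = f k := by
      intro k
      induction k with
      | zero =>
        apply List.ext_getElem
        · simp [hLdef]
        · intro n h1 h2
          simp only [List.getElem_map, List.getElem_range]
          have hn : n < L := by simpa using h1
          rw [hbdef]
          simp only [dif_pos hn]
      | succ k IH =>
        have hbval : b (L + k) = mm k := by
          have hnlt : ¬ (L + k < L) := by omega
          simp only [hbdef]
          rw [dif_neg hnlt, Nat.add_sub_cancel_left]
        have e : L + (k + 1) = (L + k) + 1 := rfl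
        rw [e, List.range_succ, List.map_append, List.map_singleton, IH, hmm k, hbval]
    have hB : ∀ j, j ≤ L → (List.range j).map b = (f 0).take j := by
      intro j hj
      apply List.ext_getElem
      · rw [hLdef] at hj
        simp only [List.length_map, List.length_range, List.length_take]
        omega
      · intro n h1 h2
        simp only [List.getElem_map, List.getElem_range, List.getElem_take]
        have hn : n < L := by
          simp only [List.length_map, List.length_range] at h1
          omega
        simp only [hbdef]
        rw [dif_pos hn]
    have hib : InfBranch ρ b := by
      intro n
      rcases le_or_gt n L with h | h
      · rw [hB n h]
        have : (ρ ((f 0).take n ++ (f 0).drop n)).isSome := by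
          rw [List.take_append_drop]
          exact hsome 0
        exact hprefix _ _ this
      · have e : n = L + (n - L) := by omega
        rw [e, hA (n - L)]
        exact hsome (n - L)
    obtain ⟨facc, hfacc, hio⟩ := hbranch b hib
    obtain ⟨n, hn, i, heq⟩ := hio (L + 1)
    have e : n = L + (n - L) := by omega
    rw [e, hA (n - L)] at heq
    obtain ⟨m', hm'⟩ : ∃ m', n - L = m' + 1 := ⟨n - L - 1, by omega⟩
    rw [hm'] at heq
    obtain ⟨q, i', hq, hnacc⟩ := (hrel m').1
    rw [heq] at hq
    injection hq with hq'
    injection hq' with h1 h2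
    exact hnacc (h1 ▸ hfacc)
  have hwf : WellFounded Rel := by
    constructor
    intro a
    by_contra hna
    have hstep : ∀ x : {x : List ℕ // ¬ Acc Rel x}, ∃ y : {x : List ℕ // ¬ Acc Rel x},
        Rel y.1 x.1 := by
      rintro ⟨x, hx⟩
      by_contra h
      push_neg at h
      apply hx
      constructor
      intro y hy
      by_contra hy'
      exact (h ⟨y, hy'⟩) hy
    choose nxt hnxt using hstep
    exact hdesc (fun n => (Nat.rec ⟨a, hna⟩ (fun _ p => nxt p) n :
      {x : List ℕ // ¬ Acc Rel x}).1) (fun n => hnxt _)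
  -- minimal-rank representative nodes
  have hpick : ∀ c : Q × ℕ, (∃ x, ρ x = some (.conf c.1 c.2)) →
      ∃ x, ρ x = some (.conf c.1 c.2) ∧
        ∀ y, ρ y = some (.conf c.1 c.2) → (hwf.apply x).rank ≤ (hwf.apply y).rank := by
    intro c hc
    obtain ⟨o, ho, hmin⟩ := Ordinal.lt_wf.has_min ((fun x => (hwf.apply x).rank) '' {x | ρ x = some (.conf c.1 c.2)})
      (Set.Nonempty.image _ hc)
    obtain ⟨x, hx, rfl⟩ := ho
    exact ⟨x, hx, fun y hy => not_lt.1 (hmin _ ⟨y, hy, rfl⟩)⟩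
  choose pick hpick1 hpick2 using hpick
  -- the positional strategy, exact annotation, and activity sets
  set α' : ℕ → Set Q := fun i => {q | ∃ x, ρ x = some (.conf q i)} with hαdef
  set γ' : ℕ → Set (Q × Dir × Q) := fun i =>
    {e | ∃ h : (∃ x, ρ x = some (.conf e.1 i)),
      (∀ a, w[i]? = some a → M.delta e.1 a ≠ .tru) ∧
      ∃ m j, e.2.1.apply i = some j ∧
        ρ (pick (e.1, i) h ++ [m]) = some (.conf e.2.2 j)} with hγdef
  set η' : ℕ → Set (Q × Prop × Q) := fun i =>
    {e | ∃ k c, 1 ≤ k ∧ IsPath γ' i c k (e.1, i) (e.2.2, i) ∧ (e.2.1 ↔ HasF M c k)} with hηdef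
  -- configuration values and the decrease lemma
  set v : Q × ℕ → Ordinal := fun c =>
    if h : ∃ x, ρ x = some (.conf c.1 c.2) then (hwf.apply (pick c h)).rank else 0 with hvdef
  have hdec : ∀ c1 c2 : Q × ℕ, Step γ' c1 c2 → c2.1 ∉ M.acc → v c2 < v c1 := by
    intro c1 c2 hstep hnacc
    obtain ⟨d, hmem, happ⟩ := hstep
    obtain ⟨h, hntru, m, j, happj, hchild⟩ := hmem
    rw [happj] at happ
    injection happ with hj
    rw [hj] at hchild
    have hchild' : ρ (pick (c1.1, c1.2) h ++ [m]) = some (.conf c2.1 c2.2) := hchild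
    have hrel : Rel (pick (c1.1, c1.2) h ++ [m]) (pick (c1.1, c1.2) h) :=
      ⟨⟨c2.1, c2.2, hchild', hnacc⟩, ⟨m, rfl⟩⟩
    have h2 : ∃ x, ρ x = some (.conf c2.1 c2.2) := ⟨_, hchild'⟩
    have hlt : (hwf.apply (pick (c1.1, c1.2) h ++ [m])).rank < (hwf.apply (pick (c1.1, c1.2) h)).rank :=
      (hwf.apply _).rank_lt_of_rel hrel
    have hle : (hwf.apply (pick (c2.1, c2.2) h2)).rank ≤ (hwf.apply (pick (c1.1, c1.2) h ++ [m])).rank :=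
      hpick2 (c2.1, c2.2) h2 _ hchild'
    rw [hvdef]
    simp only []
    rw [dif_pos (show ∃ x, ρ x = some (.conf c2.1 c2.2) from h2),
      dif_pos (show ∃ x, ρ x = some (.conf c1.1 c1.2) from h)]
    exact lt_of_le_of_lt hle hlt
  refine ⟨γ', η', α', ?_, ?_, ?_, ?_, ?_, ?_, ?_, ?_, ?_⟩
  · -- start_mem
    exact ⟨[], hrun.root⟩
  · -- active_lt
    rintro i q ⟨x, hx⟩
    obtain ⟨a, ha, _⟩ := hrun.node x q i hx
    exact (List.getElem?_eq_some_iff.1 ha).1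
  · -- sat
    rintro i q a hq ha
    obtain ⟨x0, hx0⟩ := hq
    have hq' : ∃ x, ρ x = some (.conf q i) := ⟨x0, hx0⟩
    have hxp : ρ (pick (q, i) hq') = some (.conf q i) := hpick1 _ hq'
    obtain ⟨a', ha', hcases⟩ := hrun.node _ q i hxp
    rw [ha] at ha'
    injection ha' with haa
    subst haa
    rcases hcases with ⟨hfls, hnone⟩ | ⟨htru, _, _⟩ | ⟨htru, hfls, S, hsat, hfwd, hbwd⟩
    · exfalso
      obtain ⟨m, c, hc⟩ := hchildex _ q i hxp
      rw [hnone m] at hc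
      exact absurd hc (by simp)
    · constructor
      · rw [htru]; trivial
      · intro hn; exact absurd htru hn
    · have hsub : S ⊆ sproj (γ' i) q := by
        rintro τ hτ
        obtain ⟨m, j, happ, hchild⟩ := hfwd τ hτ
        refine ⟨hq', ?_, m, j, happ, hchild⟩
        intro a'' ha''
        rw [ha] at ha''
        injection ha'' with h''
        rw [← h'']
        exact htru
      constructor
      · exact PBF.satBy_mono hsub hsat
      · intro _
        obtain ⟨m, cc, hcc⟩ := hchildex _ q i hxp
        obtain ⟨τ, hτS, j, happ, hcceq⟩ := hbwd m cc hcc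
        exact ⟨τ, hsub hτS⟩
  · -- edge
    rintro i q d q' ⟨h, hntru, m, j, happ, hchild⟩
    exact ⟨h, j, happ, ⟨_, hchild⟩⟩
  · -- clo1
    rintro i q q' hmem
    have happ : Dir.stay.apply i = some i := rfl
    obtain ⟨hpath, hiff⟩ := isPath_single (M := M) hmem happ (le_refl i) (le_refl i)
    exact ⟨1, _, le_refl 1, hpath, hiff.symm⟩
  · -- clo2
    rintro i q P q' P' q'' ⟨k1, c1, hk1, hp1, hi1⟩ ⟨k2, c2, hk2, hp2, hi2⟩
    obtain ⟨c3, hp3, hi3⟩ := isPath_compose (M := M) hp1 hp2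
    exact ⟨k1 + k2, c3, by omega, hp3, (or_congr hi1 hi2).trans hi3.symm⟩
  · -- clo3
    rintro i q q₁ q' hmem1 hmem2
    have happ1 : Dir.back.apply (i + 1) = some i := rfl
    have happ2 : Dir.fwd.apply i = some (i + 1) := rfl
    obtain ⟨hp1, hi1⟩ := isPath_single (M := M) hmem1 happ1 (le_refl (i + 1)) (by omega)
    obtain ⟨hp2, hi2⟩ := isPath_single (M := M) hmem2 happ2 (by omega) (le_refl (i + 1))
    obtain ⟨c3, hp3, hi3⟩ := isPath_compose (M := M) hp1 hp2
    exact ⟨2, c3, by omega, hp3, (or_congr hi1.symm hi2.symm).trans hi3.symm⟩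
  · -- clo4
    rintro i q q₁ P q₂ q' hmem1 ⟨k, c, hk, hpin, hiffin⟩ hmem2
    have happ1 : Dir.back.apply (i + 1) = some i := rfl
    have happ2 : Dir.fwd.apply i = some (i + 1) := rfl
    obtain ⟨hp1, hi1⟩ := isPath_single (M := M) hmem1 happ1 (le_refl (i + 1)) (by omega)
    obtain ⟨hp2, hi2⟩ := isPath_single (M := M) hmem2 happ2 (by omega) (le_refl (i + 1))
    have hpin' := isPath_mono_bnd hpin (by omega : i ≤ i + 1)
    obtain ⟨c3, hp3, hi3⟩ := isPath_compose (M := M) hpin' hp2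
    obtain ⟨c4, hp4, hi4⟩ := isPath_compose (M := M) hp1 hp3
    exact ⟨1 + (k + 1), c4, by omega, hp4,
      (or_congr hi1.symm ((or_congr hiffin hi2.symm).trans hi3.symm)).trans hi4.symm⟩
  · -- accpt
    rintro i q P ⟨k, c, hk, hpath, hiff⟩
    by_contra hP
    have hnF : ∀ m, 1 ≤ m → m ≤ k → (c m).1 ∉ M.acc := by
      intro m h1 h2 hF
      exact hP (hiff.2 ⟨m, h1, h2, hF⟩)
    have hchain : ∀ m, 1 ≤ m → m ≤ k → v (c m) < v (c 0) := by
      intro m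
      induction m with
      | zero => omega
      | succ m IH =>
        intro _ h2
        rcases Nat.eq_or_lt_of_le (show 1 ≤ m + 1 by omega) with h | h
        · have hm0 : m = 0 := by omega
          subst hm0
          exact hdec _ _ (hpath.step 0 (by omega)) (hnF 1 (by omega) h2)
        · have hlt : v (c (m + 1)) < v (c m) :=
            hdec _ _ (hpath.step m (by omega)) (hnF (m + 1) (by omega) h2)
          exact lt_trans hlt (IH (by omega) (by omega))
    have := hchain k (by omega) (le_refl k)
    rw [hpath.first, hpath.last] at this
    exact lt_irrefl _ this

/-! ### The NFA -/

/-- States of the NFA: a start flag, the previous activity set, the previous strategy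
letter, the previous annotation letter, and the current activity set. -/
abbrev NSt (Q : Type) : Type :=
  Bool × Set Q × Set (Q × Dir × Q) × Set (Q × Prop × Q) × Set Q

/-- The NFA guessing a strategy word with an accepting annotation on the fly. -/
def nfaOf (M : TAFW Q A) : NFA A (NSt Q) where
  step := fun s a =>
    {t | t.1 = false ∧ t.2.1 = s.2.2.2.2 ∧
      (∀ q ∈ s.2.2.2.2, (M.delta q a).satBy (sproj t.2.2.1 q) ∧
        (M.delta q a ≠ .tru → (sproj t.2.2.1 q).Nonempty)) ∧
      (∀ q d q', (q, d, q') ∈ t.2.2.1 → q ∈ s.2.2.2.2 ∧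
        (d = .stay → q' ∈ s.2.2.2.2) ∧ (d = .fwd → q' ∈ t.2.2.2.2) ∧
        (d = .back → s.1 = false ∧ q' ∈ s.2.1)) ∧
      (∀ q q', (q, Dir.stay, q') ∈ t.2.2.1 → (q, q' ∈ M.acc, q') ∈ t.2.2.2.1) ∧
      (∀ q P q' P' q'', (q, P, q') ∈ t.2.2.2.1 → (q', P', q'') ∈ t.2.2.2.1 →
        (q, P ∨ P', q'') ∈ t.2.2.2.1) ∧
      (∀ q q₁ q', (q, Dir.back, q₁) ∈ t.2.2.1 → (q₁, Dir.fwd, q') ∈ s.2.2.1 →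
        (q, q₁ ∈ M.acc ∨ q' ∈ M.acc, q') ∈ t.2.2.2.1) ∧
      (∀ q q₁ P q₂ q', (q, Dir.back, q₁) ∈ t.2.2.1 → (q₁, P, q₂) ∈ s.2.2.2.1 →
        (q₂, Dir.fwd, q') ∈ s.2.2.1 → (q, q₁ ∈ M.acc ∨ P ∨ q' ∈ M.acc, q') ∈ t.2.2.2.1) ∧
      (∀ q P, (q, P, q) ∈ t.2.2.2.1 → P)}
  start := {s | s.1 = true ∧ M.start ∈ s.2.2.2.2}
  accept := {s | s.2.2.2.2 = ∅}

/-- Characterisation of `evalFrom` by chains of states. -/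
lemma mem_evalFrom_iff_chain {σ : Type} (N : NFA A σ) (S : Set σ) (w : List A) (s : σ) :
    s ∈ N.evalFrom S w ↔ ∃ f : ℕ → σ, f 0 ∈ S ∧
      (∀ k a, w[k]? = some a → f (k + 1) ∈ N.step (f k) a) ∧ f w.length = s := by
  induction w using List.reverseRecOn generalizing s with
  | nil =>
    constructor
    · intro h
      exact ⟨fun _ => s, h, fun k a hk => by simp at hk, rfl⟩
    · rintro ⟨f, h0, _, hlen⟩
      rw [← hlen]
      exact h0
  | append_singleton w a IH =>
    rw [NFA.evalFrom_append, NFA.evalFrom_singleton, NFA.mem_stepSet]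
    constructor
    · rintro ⟨s', hs', hstep⟩
      obtain ⟨f, h0, hf, hlen⟩ := (IH s').1 hs'
      refine ⟨fun k => if k = w.length + 1 then s else f k, ?_, ?_, ?_⟩
      · show (if (0 : ℕ) = w.length + 1 then s else f 0) ∈ S
        rw [if_neg (by omega : (0 : ℕ) ≠ w.length + 1)]
        exact h0
      · intro k a' hk
        show (if k + 1 = w.length + 1 then s else f (k + 1)) ∈
          N.step (if k = w.length + 1 then s else f k) a'
        have hklen : k < w.length + 1 := by
          have := (List.getElem?_eq_some_iff.1 hk).1
          simpa using this
        rcases Nat.lt_or_ge k w.length with h | h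
        · rw [if_neg (by omega : ¬ (k + 1 = w.length + 1)),
            if_neg (by omega : ¬ (k = w.length + 1))]
          exact hf k a' (by rwa [List.getElem?_append_left h] at hk)
        · have hkl : k = w.length := by omega
          rw [if_pos (by omega : k + 1 = w.length + 1),
            if_neg (by omega : ¬ (k = w.length + 1)), hkl, hlen]
          have haa : a' = a := by
            rw [hkl, List.getElem?_concat_length] at hk
            injection hk with h'
            exact h'.symm
          rw [haa]
          exact hstep
      · show (if (w ++ [a]).length = w.length + 1 then s else f (w ++ [a]).length) = s
        have e : (w ++ [a]).length = w.length + 1 := by simp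
        rw [e, if_pos rfl]
    · rintro ⟨f, h0, hf, hlen⟩
      refine ⟨f w.length, (IH _).2 ⟨f, h0, ?_, rfl⟩, ?_⟩
      · intro k a' hk
        have hkl : k < w.length := (List.getElem?_eq_some_iff.1 hk).1
        exact hf k a' (by rwa [List.getElem?_append_left hkl])
      · have e : (w ++ [a]).length = w.length + 1 := by simp
        rw [e] at hlen
        have := hf w.length a (List.getElem?_concat_length)
        rwa [hlen] at this

theorem nfa_accepts_iff_good (M : TAFW Q A) (w : List A) :
    w ∈ (nfaOf M).accepts ↔ ∃ γ η α, Good M w γ η α := by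
  classical
  rw [NFA.mem_accepts]
  constructor
  · rintro ⟨s, hsacc, hseval⟩
    rw [mem_evalFrom_iff_chain] at hseval
    obtain ⟨f, h0, hf, hlen⟩ := hseval
    have hαn : (f w.length).2.2.2.2 = ∅ := by rw [hlen]; exact hsacc
    set γ : ℕ → Set (Q × Dir × Q) :=
      fun i => if i + 1 ≤ w.length then (f (i + 1)).2.2.1 else ∅ with hγdef
    set η : ℕ → Set (Q × Prop × Q) :=
      fun i => if i + 1 ≤ w.length then (f (i + 1)).2.2.2.1 else ∅ with hηdef
    set α : ℕ → Set Q := fun i => if i ≤ w.length then (f i).2.2.2.2 else ∅ with hαdef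
    have hγlt : ∀ i, i < w.length → γ i = (f (i + 1)).2.2.1 := by
      intro i hi
      simp only [hγdef]
      rw [if_pos (by omega)]
    have hγge : ∀ i, ¬ (i < w.length) → γ i = ∅ := by
      intro i hi
      simp only [hγdef]
      rw [if_neg (by omega)]
    have hηlt : ∀ i, i < w.length → η i = (f (i + 1)).2.2.2.1 := by
      intro i hi
      simp only [hηdef]
      rw [if_pos (by omega)]
    have hηge : ∀ i, ¬ (i < w.length) → η i = ∅ := by
      intro i hi
      simp only [hηdef]
      rw [if_neg (by omega)]
    have hαle : ∀ i, i ≤ w.length → α i = (f i).2.2.2.2 := by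
      intro i hi
      simp only [hαdef]
      rw [if_pos hi]
    have hT : ∀ i (hi : i < w.length), f (i + 1) ∈ (nfaOf M).step (f i) (w.get ⟨i, hi⟩) :=
      fun i hi => hf i _ (List.getElem?_eq_getElem hi)
    have hαp : ∀ j (h : j < w.length), (f (j + 1)).2.1 = (f j).2.2.2.2 :=
      fun j h => (hT j h).2.1
    refine ⟨γ, η, α, ?_, ?_, ?_, ?_, ?_, ?_, ?_, ?_, ?_⟩
    · rw [hαle 0 (by omega)]
      exact h0.2
    · intro i q hq
      by_contra hge
      push_neg at hge
      rcases Nat.eq_or_lt_of_le hge with h | h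
      · rw [hαle i (le_of_eq h.symm), ← h, hαn] at hq
        exact hq
      · rw [hαdef] at hq
        simp only [Set.mem_setOf_eq] at hq
        rw [if_neg (by omega)] at hq
        exact hq
    · intro i q a hq ha
      have hi : i < w.length := (List.getElem?_eq_some_iff.1 ha).1
      have haa : w.get ⟨i, hi⟩ = a := by
        rw [List.getElem?_eq_getElem hi] at ha
        injection ha
      have hq' : q ∈ (f i).2.2.2.2 := by rwa [hαle i hi.le] at hq
      have := (hT i hi).2.2.1 q hq'
      rw [haa] at this
      rw [hγlt i hi]
      exact this
    · intro i q d q' hmem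
      by_cases hi : i < w.length
      · rw [hγlt i hi] at hmem
        obtain ⟨hqα, hstay, hfwd, hback⟩ := (hT i hi).2.2.2.1 q d q' hmem
        refine ⟨by rw [hαle i hi.le]; exact hqα, ?_⟩
        cases d with
        | stay => exact ⟨i, rfl, by rw [hαle i hi.le]; exact hstay rfl⟩
        | fwd => exact ⟨i + 1, rfl, by rw [hαle (i + 1) hi]; exact hfwd rfl⟩
        | back =>
          obtain ⟨hflag, hq'⟩ := hback rfl
          obtain ⟨j, rfl⟩ : ∃ j, i = j + 1 := by
            cases i with
            | zero =>
              exfalso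
              rw [h0.1] at hflag
              exact absurd hflag (by simp)
            | succ j => exact ⟨j, rfl⟩
          rw [hαp j (by omega)] at hq'
          exact ⟨j, rfl, by rw [hαle j (by omega)]; exact hq'⟩
      · rw [hγge i hi] at hmem
        exact absurd hmem (Set.notMem_empty _)
    · intro i q q' hmem
      by_cases hi : i < w.length
      · rw [hγlt i hi] at hmem
        rw [hηlt i hi]
        exact (hT i hi).2.2.2.2.1 q q' hmem
      · rw [hγge i hi] at hmem
        exact absurd hmem (Set.notMem_empty _)
    · intro i q P q' P' q'' hm1 hm2
      by_cases hi : i < w.length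
      · rw [hηlt i hi] at hm1 hm2 ⊢
        exact (hT i hi).2.2.2.2.2.1 q P q' P' q'' hm1 hm2
      · rw [hηge i hi] at hm1
        exact absurd hm1 (Set.notMem_empty _)
    · intro i q q₁ q' hm1 hm2
      by_cases hi : i + 1 < w.length
      · rw [hγlt (i + 1) hi] at hm1
        rw [hγlt i (by omega)] at hm2
        rw [hηlt (i + 1) hi]
        exact (hT (i + 1) hi).2.2.2.2.2.2.1 q q₁ q' hm1 hm2
      · rw [hγge (i + 1) hi] at hm1
        exact absurd hm1 (Set.notMem_empty _)
    · intro i q q₁ P q₂ q' hm1 hm2 hm3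
      by_cases hi : i + 1 < w.length
      · rw [hγlt (i + 1) hi] at hm1
        rw [hγlt i (by omega)] at hm3
        rw [hηlt i (by omega)] at hm2
        rw [hηlt (i + 1) hi]
        exact (hT (i + 1) hi).2.2.2.2.2.2.2.1 q q₁ P q₂ q' hm1 hm2 hm3
      · rw [hγge (i + 1) hi] at hm1
        exact absurd hm1 (Set.notMem_empty _)
    · intro i q P hm
      by_cases hi : i < w.length
      · rw [hηlt i hi] at hm
        exact (hT i hi).2.2.2.2.2.2.2.2 q P hm
      · rw [hηge i hi] at hm
        exact absurd hm (Set.notMem_empty _)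
  · rintro ⟨γ, η, α, hg⟩
    set f : ℕ → NSt Q := fun k =>
      ((match k with | 0 => true | _ + 1 => false), α (k - 1), γ (k - 1), η (k - 1), α k)
      with hfdef
    refine ⟨f w.length, ?_, ?_⟩
    · show α w.length = ∅
      exact Set.eq_empty_iff_forall_notMem.2
        (fun q hq => absurd (hg.active_lt _ _ hq) (lt_irrefl _))
    · rw [mem_evalFrom_iff_chain]
      refine ⟨f, ⟨rfl, hg.start_mem⟩, ?_, rfl⟩
      intro k a hk
      refine ⟨rfl, rfl, ?_, ?_, ?_, ?_, ?_, ?_, ?_⟩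
      · exact fun q hq => hg.sat k q a hq hk
      · intro q d q' hmem
        obtain ⟨hqα, j, happ, hj⟩ := hg.edge k q d q' hmem
        refine ⟨hqα, ?_, ?_, ?_⟩
        · rintro rfl
          have : j = k := by
            have : Dir.stay.apply k = some k := rfl
            rw [this] at happ
            injection happ with h'
            exact h'.symm
          rwa [this] at hj
        · rintro rfl
          have : j = k + 1 := by
            have : Dir.fwd.apply k = some (k + 1) := rfl
            rw [this] at happ
            injection happ with h'
            exact h'.symm
          rwa [this] at hj
        · rintro rfl
          cases k with
          | zero => exact absurd happ (by simp [Dir.apply])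
          | succ k' =>
            have : j = k' := by
              have : Dir.back.apply (k' + 1) = some k' := rfl
              rw [this] at happ
              injection happ with h'
              exact h'.symm
            exact ⟨rfl, by show q' ∈ α (k' + 1 - 1); rwa [this] at hj⟩
      · exact fun q q' h => hg.clo1 k q q' h
      · exact fun q P q' P' q'' h1 h2 => hg.clo2 k q P q' P' q'' h1 h2
      · intro q q₁ q' h1 h2
        cases k with
        | zero =>
          exfalso
          obtain ⟨_, j, happ, _⟩ := hg.edge 0 q .back q₁ h1
          exact absurd happ (by simp [Dir.apply])
        | succ k' => exact hg.clo3 k' q q₁ q' h1 h2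
      · intro q q₁ P q₂ q' h1 h2 h3
        cases k with
        | zero =>
          exfalso
          obtain ⟨_, j, happ, _⟩ := hg.edge 0 q .back q₁ h1
          exact absurd happ (by simp [Dir.apply])
        | succ k' => exact hg.clo4 k' q q₁ P q₂ q' h1 h2 h3
      · exact fun q P h => hg.accpt k q P h

/-- Corollary 4.1: every 2AFW with finite state set `Q` has an
equivalent NFA with at most `2^{O(|Q|²)}` states. -/
theorem tafw_to_nfa :
    ∃ c : ℕ, ∀ (Q A : Type) (_ : Fintype Q) (M : TAFW Q A),
      ∃ (S : Type) (_ : Fintype S) (N : NFA A S),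
        Fintype.card S ≤ 2 ^ (c * Fintype.card Q ^ 2) ∧
        ∀ w : List A, w ∈ N.accepts ↔ M.Accepts w 0 := by
  refine ⟨8, ?_⟩
  intro Q A hQ M
  refine ⟨NSt Q, inferInstance, nfaOf M, ?_, ?_⟩
  · have hq : 1 ≤ Fintype.card Q := Fintype.card_pos_iff.2 ⟨M.start⟩
    have hcard : Fintype.card (NSt Q) =
        2 ^ (1 + Fintype.card Q + Fintype.card Q * (3 * Fintype.card Q) +
          Fintype.card Q * (2 * Fintype.card Q) + Fintype.card Q) := by
      simp [NSt, Fintype.card_prod, Fintype.card_set, Fintype.card_bool, Fintype.card_prop,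
        card_dir]
      ring
    rw [hcard]
    refine Nat.pow_le_pow_right (by norm_num) ?_
    have h2 : Fintype.card Q ≤ Fintype.card Q * Fintype.card Q :=
      Nat.le_mul_of_pos_left _ (by omega)
    have h3 : 1 ≤ Fintype.card Q * Fintype.card Q := by omega
    have e : 8 * Fintype.card Q ^ 2 = 8 * (Fintype.card Q * Fintype.card Q) := by ring
    have e2 : 1 + Fintype.card Q + Fintype.card Q * (3 * Fintype.card Q) +
        Fintype.card Q * (2 * Fintype.card Q) + Fintype.card Q =
        1 + 2 * Fintype.card Q + 5 * (Fintype.card Q * Fintype.card Q) := by ring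
    rw [e, e2]
    omega
  · intro w
    rw [nfa_accepts_iff_good]
    constructor
    · rintro ⟨γ, η, α, hg⟩
      exact good_accepts hg
    · exact accepts_good
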